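/- Let X = (x₁,...,x_p) have α-dependent coordinates (with α ≥ 1) and x̃_j = x_j − E[x_j]. Then for any fixed s ≥ 2, the number of s-tuples (j₁,...,j_s) ∈ {1,...,p}^s with cum(x̃_{j₁},...,x̃_{j_s}) ≠ 0 is at most 2^{s−1}·(s!)·α^{s−1}·p. -/

import Mathlib

open MeasureTheory ProbabilityTheory

open Classical in
/-- The joint cumulant `cum(f₁,…,f_s)` of real random variables, defined through the
standard partition formula
`cum(f) = Σ_{π partition of {1,…,s}} (−1)^{|π|−1}(|π|−1)! Π_{B∈π} E[Π_{i∈B} fᵢ]`. -/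
noncomputable def jointCum {Ω : Type*} [MeasurableSpace Ω] (μ : Measure Ω)
    {s : ℕ} (f : Fin s → Ω → ℝ) : ℝ :=
  ∑ P ∈ Finset.univ.filter (fun P : Finset (Finset (Fin s)) =>
      (∀ B ∈ P, B.Nonempty) ∧
      (∀ B ∈ P, ∀ B' ∈ P, B ≠ B' → Disjoint B B') ∧
      P.biUnion id = Finset.univ),
    (-1 : ℝ) ^ (P.card - 1) * (Nat.factorial (P.card - 1) : ℝ) *
      ∏ B ∈ P, ∫ ω, ∏ i ∈ B, f i ω ∂μ

/-- `α`-dependence of the coordinates of a random vector `X = (x₀,…,x_{p−1})`. -/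
def AlphaDep {Ω : Type*} [MeasurableSpace Ω] (μ : Measure Ω)
    {p : ℕ} (X : Fin p → Ω → ℝ) (α : ℕ) : Prop :=
  ∀ j ℓ : ℕ, α < ℓ →
    IndepFun (fun ω => fun i : {i : Fin p // (i : ℕ) ≤ j} => X i ω)
      (fun ω => fun i : {i : Fin p // j + ℓ ≤ (i : ℕ)} => X i ω) μ


set_option linter.unusedSectionVars false

namespace Stmt15

open Finset


variable {ι : Type*} [Fintype ι] [DecidableEq ι]

open Classical in
noncomputable def partsOf (T : Finset ι) : Finset (Finset (Finset ι)) :=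
  Finset.univ.filter (fun P : Finset (Finset ι) =>
    (∀ B ∈ P, B.Nonempty) ∧
    (∀ B ∈ P, ∀ B' ∈ P, B ≠ B' → Disjoint B B') ∧
    P.biUnion id = T)

lemma mem_partsOf {T : Finset ι} {P : Finset (Finset ι)} :
    P ∈ partsOf T ↔ (∀ B ∈ P, B.Nonempty) ∧
      (∀ B ∈ P, ∀ B' ∈ P, B ≠ B' → Disjoint B B') ∧ P.biUnion id = T := by
  simp [partsOf]

lemma block_subset {T : Finset ι} {P : Finset (Finset ι)} (hP : P ∈ partsOf T)
    {B : Finset ι} (hB : B ∈ P) : B ⊆ T := by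
  rw [mem_partsOf] at hP
  rw [← hP.2.2]
  exact Finset.subset_biUnion_of_mem id hB

lemma block_nonempty {T : Finset ι} {P : Finset (Finset ι)} (hP : P ∈ partsOf T)
    {B : Finset ι} (hB : B ∈ P) : B.Nonempty := (mem_partsOf.1 hP).1 B hB

lemma block_unique {T : Finset ι} {P : Finset (Finset ι)} (hP : P ∈ partsOf T)
    {B B' : Finset ι} (hB : B ∈ P) (hB' : B' ∈ P) {a : ι} (ha : a ∈ B) (ha' : a ∈ B') :
    B = B' := by
  by_contra hne
  exact Finset.disjoint_left.1 ((mem_partsOf.1 hP).2.1 B hB B' hB' hne) ha ha'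

def fiber (T : Finset ι) {j : ℕ} (φ : {a // a ∈ T} → Fin j) (i : Fin j) : Finset ι :=
  (T.attach.filter (fun a => φ a = i)).image Subtype.val

lemma mem_fiber {T : Finset ι} {j : ℕ} {φ : {a // a ∈ T} → Fin j} {i : Fin j} {b : ι} :
    b ∈ fiber T φ i ↔ ∃ h : b ∈ T, φ ⟨b, h⟩ = i := by
  simp only [fiber, mem_image, mem_filter, mem_attach, true_and]
  constructor
  · rintro ⟨⟨a, ha⟩, h1, rfl⟩
    exact ⟨ha, h1⟩
  · rintro ⟨h, h1⟩
    exact ⟨⟨b, h⟩, h1, rfl⟩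

lemma coe_mem_fiber {T : Finset ι} {j : ℕ} {φ : {a // a ∈ T} → Fin j} {i : Fin j}
    (a : {a // a ∈ T}) : (a : ι) ∈ fiber T φ i ↔ φ a = i := by
  rw [mem_fiber]
  constructor
  · rintro ⟨h, h1⟩
    convert h1
  · intro h
    exact ⟨a.2, by convert h⟩

lemma fiber_subset {T : Finset ι} {j : ℕ} (φ : {a // a ∈ T} → Fin j) (i : Fin j) :
    fiber T φ i ⊆ T := by
  intro b hb
  rw [mem_fiber] at hb
  exact hb.1

lemma fiber_disjoint {T : Finset ι} {j : ℕ} (φ : {a // a ∈ T} → Fin j) {i i' : Fin j}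
    (h : i ≠ i') : Disjoint (fiber T φ i) (fiber T φ i') := by
  rw [Finset.disjoint_left]
  intro b hb hb'
  rw [mem_fiber] at hb hb'
  obtain ⟨hT, h1⟩ := hb
  obtain ⟨hT', h2⟩ := hb'
  exact h (h1 ▸ h2 ▸ rfl)

noncomputable def fiberPart (T : Finset ι) {j : ℕ} (φ : {a // a ∈ T} → Fin j) :
    Finset (Finset ι) :=
  (Finset.univ.image (fun i => fiber T φ i)).erase ∅

lemma mem_fiberPart {T : Finset ι} {j : ℕ} {φ : {a // a ∈ T} → Fin j} {B : Finset ι} :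
    B ∈ fiberPart T φ ↔ B ≠ ∅ ∧ ∃ i, fiber T φ i = B := by
  simp [fiberPart, mem_erase]

lemma fiberPart_mem_partsOf {T : Finset ι} {j : ℕ} (φ : {a // a ∈ T} → Fin j) :
    fiberPart T φ ∈ partsOf T := by
  rw [mem_partsOf]
  refine ⟨?_, ?_, ?_⟩
  · intro B hB
    rw [mem_fiberPart] at hB
    exact Finset.nonempty_iff_ne_empty.2 hB.1
  · intro B hB B' hB' hne
    rw [mem_fiberPart] at hB hB'
    obtain ⟨_, i, rfl⟩ := hB
    obtain ⟨_, i', rfl⟩ := hB'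
    exact fiber_disjoint φ (fun h => hne (h ▸ rfl))
  · ext b
    simp only [Finset.mem_biUnion, id]
    constructor
    · rintro ⟨B, hB, hb⟩
      rw [mem_fiberPart] at hB
      obtain ⟨_, i, rfl⟩ := hB
      exact fiber_subset φ i hb
    · intro hb
      refine ⟨fiber T φ (φ ⟨b, hb⟩), ?_, ?_⟩
      · rw [mem_fiberPart]
        refine ⟨?_, ⟨_, rfl⟩⟩
        apply Finset.nonempty_iff_ne_empty.1
        exact ⟨b, (coe_mem_fiber ⟨b, hb⟩).2 rfl⟩
      · exact (coe_mem_fiber ⟨b, hb⟩).2 rfl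

/-- product over colors equals product over blocks of the fiber partition -/
lemma prod_fiber_eq (M : Finset ι → ℝ) (hM0 : M ∅ = 1) {T : Finset ι} {j : ℕ}
    (φ : {a // a ∈ T} → Fin j) :
    ∏ i : Fin j, M (fiber T φ i) = ∏ B ∈ fiberPart T φ, M B := by
  classical
  rw [← Finset.prod_filter_mul_prod_filter_not Finset.univ (fun i => fiber T φ i ≠ ∅)
    (fun i => M (fiber T φ i))]
  have h2 : ∏ i ∈ Finset.univ.filter (fun i => ¬ fiber T φ i ≠ ∅), M (fiber T φ i) = 1 := by
    apply Finset.prod_eq_one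
    intro i hi
    simp only [mem_filter, not_not] at hi
    rw [hi.2, hM0]
  rw [h2, mul_one]
  rw [← Finset.prod_image]
  · apply Finset.prod_congr _ (fun _ _ => rfl)
    ext B
    simp only [mem_image, mem_filter, mem_univ, true_and, mem_fiberPart]
    constructor
    · rintro ⟨i, hne, rfl⟩
      exact ⟨hne, i, rfl⟩
    · rintro ⟨hne, i, rfl⟩
      exact ⟨i, hne, rfl⟩
  · intro i hi i' hi' heq
    simp only [Finset.coe_filter, Finset.mem_coe, mem_filter, mem_univ, true_and, Set.mem_setOf_eq] at hi hi'
    by_contra hne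
    have hd := fiber_disjoint φ hne
    rw [heq] at hd
    obtain ⟨b, hb⟩ := Finset.nonempty_iff_ne_empty.2 hi'
    exact Finset.disjoint_left.1 hd hb hb

open Classical in
noncomputable def colorOf {T : Finset ι} {j : ℕ} (φ : {a // a ∈ T} → Fin j)
    {B : Finset ι} (hB : B.Nonempty) (hBT : B ⊆ T) : Fin j :=
  φ ⟨hB.choose, hBT hB.choose_spec⟩

lemma fiber_colorOf {T : Finset ι} {j : ℕ} {φ : {a // a ∈ T} → Fin j}
    {P : Finset (Finset ι)} (hP : P ∈ partsOf T) (hφ : fiberPart T φ = P)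
    {B : Finset ι} (hB : B ∈ P) (hBn : B.Nonempty) (hBT : B ⊆ T) :
    fiber T φ (colorOf φ hBn hBT) = B := by
  classical
  set b := hBn.choose with hbdef
  have hb : b ∈ B := hBn.choose_spec
  have hbT : b ∈ T := hBT hb
  have hbf : b ∈ fiber T φ (colorOf φ hBn hBT) := (coe_mem_fiber ⟨b, hbT⟩).2 rfl
  have hfP : fiber T φ (colorOf φ hBn hBT) ∈ P := by
    rw [← hφ, mem_fiberPart]
    exact ⟨Finset.nonempty_iff_ne_empty.1 ⟨b, hbf⟩, _, rfl⟩
  exact block_unique hP hfP hB hbf hb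

open Classical in
noncomputable def blockOf {T : Finset ι} {P : Finset (Finset ι)} (hP : P ∈ partsOf T)
    (a : {a // a ∈ T}) : Finset ι :=
  (show ∃ B, B ∈ P ∧ (a : ι) ∈ B by
    have : (a : ι) ∈ P.biUnion id := (mem_partsOf.1 hP).2.2 ▸ a.2
    simpa using this).choose

lemma blockOf_mem {T : Finset ι} {P : Finset (Finset ι)} (hP : P ∈ partsOf T)
    (a : {a // a ∈ T}) : blockOf hP a ∈ P :=
  (show ∃ B, B ∈ P ∧ (a : ι) ∈ B by
    have : (a : ι) ∈ P.biUnion id := (mem_partsOf.1 hP).2.2 ▸ a.2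
    simpa using this).choose_spec.1

lemma mem_blockOf {T : Finset ι} {P : Finset (Finset ι)} (hP : P ∈ partsOf T)
    (a : {a // a ∈ T}) : (a : ι) ∈ blockOf hP a :=
  (show ∃ B, B ∈ P ∧ (a : ι) ∈ B by
    have : (a : ι) ∈ P.biUnion id := (mem_partsOf.1 hP).2.2 ▸ a.2
    simpa using this).choose_spec.2

lemma eq_blockOf {T : Finset ι} {P : Finset (Finset ι)} (hP : P ∈ partsOf T)
    {B : Finset ι} (hB : B ∈ P) {a : {a // a ∈ T}} (ha : (a : ι) ∈ B) :
    B = blockOf hP a :=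
  block_unique hP hB (blockOf_mem hP a) ha (mem_blockOf hP a)

noncomputable def fromEmb {T : Finset ι} {P : Finset (Finset ι)} (hP : P ∈ partsOf T)
    {j : ℕ} (e : {B // B ∈ P} ↪ Fin j) : {a // a ∈ T} → Fin j :=
  fun a => e ⟨blockOf hP a, blockOf_mem hP a⟩

lemma fiber_fromEmb {T : Finset ι} {P : Finset (Finset ι)} (hP : P ∈ partsOf T)
    {j : ℕ} (e : {B // B ∈ P} ↪ Fin j) (B : {B // B ∈ P}) :
    fiber T (fromEmb hP e) (e B) = (B : Finset ι) := by
  ext x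
  rw [mem_fiber]
  constructor
  · rintro ⟨h, h1⟩
    have : (⟨blockOf hP ⟨x, h⟩, blockOf_mem hP _⟩ : {B // B ∈ P}) = B := e.injective h1
    have hx := mem_blockOf hP (⟨x, h⟩ : {a // a ∈ T})
    rw [show blockOf hP (⟨x, h⟩ : {a // a ∈ T}) = (B : Finset ι) from congrArg Subtype.val this]
      at hx
    exact hx
  · intro hx
    have hT : x ∈ T := block_subset hP B.2 hx
    refine ⟨hT, ?_⟩
    show e ⟨blockOf hP ⟨x, hT⟩, blockOf_mem hP _⟩ = e B
    congr 1
    exact Subtype.ext (eq_blockOf hP B.2 (a := ⟨x, hT⟩) hx).symm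

lemma fiber_fromEmb_empty {T : Finset ι} {P : Finset (Finset ι)} (hP : P ∈ partsOf T)
    {j : ℕ} (e : {B // B ∈ P} ↪ Fin j) (i : Fin j) (hi : ∀ B : {B // B ∈ P}, e B ≠ i) :
    fiber T (fromEmb hP e) i = ∅ := by
  ext x
  simp only [Finset.notMem_empty, iff_false, mem_fiber, not_exists]
  intro h
  exact hi ⟨blockOf hP ⟨x, h⟩, blockOf_mem hP _⟩

lemma fiberPart_fromEmb {T : Finset ι} {P : Finset (Finset ι)} (hP : P ∈ partsOf T)
    {j : ℕ} (e : {B // B ∈ P} ↪ Fin j) : fiberPart T (fromEmb hP e) = P := by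
  classical
  ext B
  rw [mem_fiberPart]
  constructor
  · rintro ⟨hne, i, rfl⟩
    by_cases hex : ∃ B' : {B // B ∈ P}, e B' = i
    · obtain ⟨B', rfl⟩ := hex
      rw [fiber_fromEmb hP e B']
      exact B'.2
    · push_neg at hex
      exact absurd (fiber_fromEmb_empty hP e i hex) hne
  · intro hB
    refine ⟨Finset.nonempty_iff_ne_empty.1 (block_nonempty hP hB), e ⟨B, hB⟩, ?_⟩
    exact fiber_fromEmb hP e ⟨B, hB⟩


noncomputable def toEmb {T : Finset ι} {P : Finset (Finset ι)} (hP : P ∈ partsOf T)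
    {j : ℕ} (φ : {a // a ∈ T} → Fin j) (hφ : fiberPart T φ = P) : {B // B ∈ P} ↪ Fin j where
  toFun := fun B => colorOf φ (block_nonempty hP B.2) (block_subset hP B.2)
  inj' := by
    intro B B' h
    have h' : colorOf φ (block_nonempty hP B.2) (block_subset hP B.2)
        = colorOf φ (block_nonempty hP B'.2) (block_subset hP B'.2) := h
    have h1 := fiber_colorOf hP hφ B.2 (block_nonempty hP B.2) (block_subset hP B.2)
    have h2 := fiber_colorOf hP hφ B'.2 (block_nonempty hP B'.2) (block_subset hP B'.2)
    rw [h'] at h1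
    exact Subtype.ext (h1.symm.trans h2)

lemma toEmb_apply {T : Finset ι} {P : Finset (Finset ι)} (hP : P ∈ partsOf T)
    {j : ℕ} (φ : {a // a ∈ T} → Fin j) (hφ : fiberPart T φ = P) (B : {B // B ∈ P}) :
    toEmb hP φ hφ B = colorOf φ (block_nonempty hP B.2) (block_subset hP B.2) := rfl

lemma fromEmb_toEmb {T : Finset ι} {P : Finset (Finset ι)} (hP : P ∈ partsOf T)
    {j : ℕ} (φ : {a // a ∈ T} → Fin j) (hφ : fiberPart T φ = P) :
    fromEmb hP (toEmb hP φ hφ) = φ := by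
  funext a
  have h1 := fiber_colorOf hP hφ (blockOf_mem hP a) (block_nonempty hP (blockOf_mem hP a))
    (block_subset hP (blockOf_mem hP a))
  have hmem : (a : ι) ∈ fiber T φ (colorOf φ (block_nonempty hP (blockOf_mem hP a))
      (block_subset hP (blockOf_mem hP a))) := by
    rw [h1]; exact mem_blockOf hP a
  show toEmb hP φ hφ ⟨blockOf hP a, blockOf_mem hP a⟩ = φ a
  rw [toEmb_apply]
  exact ((coe_mem_fiber a).1 hmem).symm

lemma toEmb_fromEmb {T : Finset ι} {P : Finset (Finset ι)} (hP : P ∈ partsOf T)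
    {j : ℕ} (e : {B // B ∈ P} ↪ Fin j) (hφ : fiberPart T (fromEmb hP e) = P) :
    toEmb hP (fromEmb hP e) hφ = e := by
  apply DFunLike.ext
  intro B
  by_contra hne
  have h1 : fiber T (fromEmb hP e) (toEmb hP (fromEmb hP e) hφ B) = (B : Finset ι) := by
    rw [toEmb_apply]
    exact fiber_colorOf hP hφ B.2 _ _
  have h2 := fiber_fromEmb hP e B
  have hd := fiber_disjoint (fromEmb hP e) hne
  rw [h1, h2] at hd
  obtain ⟨b, hb⟩ := block_nonempty hP B.2
  exact Finset.disjoint_left.1 hd hb hb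

lemma card_fiberPart_eq {T : Finset ι} {P : Finset (Finset ι)} (hP : P ∈ partsOf T) (j : ℕ) :
    (Finset.univ.filter (fun φ : {a // a ∈ T} → Fin j => fiberPart T φ = P)).card
      = j.descFactorial P.card := by
  classical
  have hcard : (Finset.univ.filter
      (fun φ : {a // a ∈ T} → Fin j => fiberPart T φ = P)).card
      = (Finset.univ : Finset ({B // B ∈ P} ↪ Fin j)).card := by
    refine Finset.card_bij' (fun φ hφ => toEmb hP φ (Finset.mem_filter.1 hφ).2)
      (fun e _ => fromEmb hP e) (fun φ hφ => Finset.mem_univ _)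
      (fun e _ => Finset.mem_filter.2 ⟨Finset.mem_univ _, fiberPart_fromEmb hP e⟩)
      (fun φ hφ => fromEmb_toEmb hP φ _) (fun e he => toEmb_fromEmb hP e _)
  rw [hcard, Finset.card_univ, Fintype.card_embedding_eq, Fintype.card_fin, Fintype.card_coe]

/-- Grouping: sum over colorings equals partition sum with descending factorial weights. -/
lemma sum_colorings (M : Finset ι → ℝ) (hM0 : M ∅ = 1) (T : Finset ι) (j : ℕ) :
    ∑ φ : ({a // a ∈ T} → Fin j), ∏ i : Fin j, M (fiber T φ i)
      = ∑ P ∈ partsOf T, (j.descFactorial P.card : ℝ) * ∏ B ∈ P, M B := by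
  classical
  rw [← Finset.sum_fiberwise_of_maps_to (g := fun φ : {a // a ∈ T} → Fin j => fiberPart T φ)
    (fun φ _ => fiberPart_mem_partsOf φ)]
  apply Finset.sum_congr rfl
  intro P hP
  have : ∀ φ ∈ Finset.univ.filter
      (fun φ : {a // a ∈ T} → Fin j => fiberPart T φ = P),
      ∏ i : Fin j, M (fiber T φ i) = ∏ B ∈ P, M B := by
    intro φ hφ
    simp only [Finset.mem_filter] at hφ
    rw [prod_fiber_eq M hM0 φ, hφ.2]
  rw [Finset.sum_congr rfl this, Finset.sum_const, card_fiberPart_eq hP j, nsmul_eq_mul]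


open Polynomial

lemma coeff_one_descPochhammer : ∀ r : ℕ, 1 ≤ r →
    (descPochhammer ℝ r).coeff 1 = (-1)^(r-1) * ((r-1).factorial : ℝ) := by
  intro r
  induction r with
  | zero => intro h; omega
  | succ n ih =>
    intro _
    rcases Nat.eq_zero_or_pos n with rfl | hn
    · simp [descPochhammer_one]
    · rw [descPochhammer_succ_right]
      have hc0 : (descPochhammer ℝ n).coeff 0 = 0 := by
        rw [Polynomial.coeff_zero_eq_eval_zero]
        exact descPochhammer_ne_zero_eval_zero (R := ℝ) hn.ne'
      have expand : (descPochhammer ℝ n * (X - (n : ℝ[X]))).coeff 1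
          = (descPochhammer ℝ n).coeff 0 - (n : ℝ) * (descPochhammer ℝ n).coeff 1 := by
        rw [mul_sub, Polynomial.coeff_sub, Polynomial.coeff_mul_X]
        congr 1
        rw [show ((n : ℝ[X])) = C (n : ℝ) by simp, Polynomial.coeff_mul_C]
        ring
      rw [expand, hc0, ih hn]
      obtain ⟨m, rfl⟩ := Nat.exists_eq_add_of_lt hn
      simp only [Nat.add_sub_cancel, Nat.zero_add, show 0 + m + 1 - 1 = m by omega]
      rw [pow_succ, Nat.factorial_succ]
      push_cast
      ring
  
noncomputable def gPoly (M : Finset ι → ℝ) (T : Finset ι) : Polynomial ℝ :=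
  ∑ P ∈ partsOf T, (∏ B ∈ P, M B) • descPochhammer ℝ P.card

lemma gPoly_eval (M : Finset ι → ℝ) (hM0 : M ∅ = 1) (T : Finset ι) (j : ℕ) :
    (gPoly M T).eval (j : ℝ) = ∑ φ : ({a // a ∈ T} → Fin j), ∏ i : Fin j, M (fiber T φ i) := by
  rw [sum_colorings M hM0 T j, gPoly, Polynomial.eval_finset_sum]
  apply Finset.sum_congr rfl
  intro P _
  rw [Polynomial.eval_smul, smul_eq_mul, descPochhammer_eval_eq_descFactorial, mul_comm]

lemma partsOf_card_pos {T : Finset ι} (hT : T.Nonempty) {P : Finset (Finset ι)}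
    (hP : P ∈ partsOf T) : P.Nonempty := by
  rcases Finset.eq_empty_or_nonempty P with rfl | h
  · exfalso
    have := (mem_partsOf.1 hP).2.2
    simp only [Finset.biUnion_empty] at this
    rw [← this] at hT
    exact Finset.not_nonempty_empty hT
  · exact h

lemma gPoly_coeff_zero (M : Finset ι → ℝ) {T : Finset ι} (hT : T.Nonempty) :
    (gPoly M T).coeff 0 = 0 := by
  rw [gPoly, Polynomial.finset_sum_coeff]
  apply Finset.sum_eq_zero
  intro P hP
  rw [Polynomial.coeff_smul, Polynomial.coeff_zero_eq_eval_zero,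
    descPochhammer_ne_zero_eval_zero (R := ℝ) (Finset.card_ne_zero.2 (partsOf_card_pos hT hP)),
    smul_zero]

lemma gPoly_coeff_one (M : Finset ι → ℝ) {T : Finset ι} (hT : T.Nonempty) :
    (gPoly M T).coeff 1
      = ∑ P ∈ partsOf T, (-1:ℝ)^(P.card - 1) * ((P.card - 1).factorial : ℝ) * ∏ B ∈ P, M B := by
  rw [gPoly, Polynomial.finset_sum_coeff]
  apply Finset.sum_congr rfl
  intro P hP
  rw [Polynomial.coeff_smul, coeff_one_descPochhammer P.card
    (Nat.one_le_iff_ne_zero.2 (Finset.card_ne_zero.2 (partsOf_card_pos hT hP))), smul_eq_mul]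
  ring


def restrict₁ (S : Finset ι) {j : ℕ} (φ : {a // a ∈ (Finset.univ : Finset ι)} → Fin j) :
    {a // a ∈ S} → Fin j := fun a => φ ⟨a.1, Finset.mem_univ _⟩

def restrict₂ (S : Finset ι) {j : ℕ} (φ : {a // a ∈ (Finset.univ : Finset ι)} → Fin j) :
    {a // a ∈ Sᶜ} → Fin j := fun a => φ ⟨a.1, Finset.mem_univ _⟩

def splitEquiv (S : Finset ι) (j : ℕ) :
    ({a // a ∈ (Finset.univ : Finset ι)} → Fin j)
      ≃ ({a // a ∈ S} → Fin j) × ({a // a ∈ Sᶜ} → Fin j) where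
  toFun φ := (restrict₁ S φ, restrict₂ S φ)
  invFun gh := fun a => if h : a.1 ∈ S then gh.1 ⟨a.1, h⟩
    else gh.2 ⟨a.1, Finset.mem_compl.2 h⟩
  left_inv φ := by
    funext a
    by_cases h : a.1 ∈ S
    · simp only [dif_pos h]
      exact congrArg φ (Subtype.ext rfl)
    · simp only [dif_neg h]
      exact congrArg φ (Subtype.ext rfl)
  right_inv gh := by
    ext a
    · simp only [restrict₁, dif_pos a.2]
    · have h : a.1 ∉ S := Finset.mem_compl.1 a.2
      simp only [restrict₂, dif_neg h]

lemma fiber_inter (S : Finset ι) {j : ℕ} (φ : {a // a ∈ (Finset.univ : Finset ι)} → Fin j)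
    (i : Fin j) : fiber Finset.univ φ i ∩ S = fiber S (restrict₁ S φ) i := by
  ext x
  simp only [Finset.mem_inter, mem_fiber]
  constructor
  · rintro ⟨⟨h, hx⟩, hS⟩
    exact ⟨hS, hx⟩
  · rintro ⟨hS, hx⟩
    exact ⟨⟨Finset.mem_univ _, hx⟩, hS⟩

lemma fiber_sdiff (S : Finset ι) {j : ℕ} (φ : {a // a ∈ (Finset.univ : Finset ι)} → Fin j)
    (i : Fin j) : fiber Finset.univ φ i \ S = fiber Sᶜ (restrict₂ S φ) i := by
  ext x
  simp only [Finset.mem_sdiff, mem_fiber]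
  constructor
  · rintro ⟨⟨h, hx⟩, hS⟩
    exact ⟨Finset.mem_compl.2 hS, hx⟩
  · rintro ⟨hS, hx⟩
    exact ⟨⟨Finset.mem_univ _, hx⟩, Finset.mem_compl.1 hS⟩

/-- Factorization of the coloring sums for a multiplicative `M`. -/
lemma colorings_factor (M : Finset ι → ℝ) (S : Finset ι)
    (hmult : ∀ B : Finset ι, M B = M (B ∩ S) * M (B \ S)) (j : ℕ) :
    ∑ φ : ({a // a ∈ (Finset.univ : Finset ι)} → Fin j),
        ∏ i : Fin j, M (fiber Finset.univ φ i)
      = (∑ ψ : ({a // a ∈ S} → Fin j), ∏ i : Fin j, M (fiber S ψ i))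
        * (∑ χ : ({a // a ∈ Sᶜ} → Fin j), ∏ i : Fin j, M (fiber Sᶜ χ i)) := by
  have step1 : ∀ φ : {a // a ∈ (Finset.univ : Finset ι)} → Fin j,
      ∏ i : Fin j, M (fiber Finset.univ φ i)
        = (∏ i : Fin j, M (fiber S (restrict₁ S φ) i))
          * ∏ i : Fin j, M (fiber Sᶜ (restrict₂ S φ) i) := by
    intro φ
    rw [← Finset.prod_mul_distrib]
    apply Finset.prod_congr rfl
    intro i _
    rw [hmult (fiber Finset.univ φ i), fiber_inter, fiber_sdiff]
  calc ∑ φ : ({a // a ∈ (Finset.univ : Finset ι)} → Fin j),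
        ∏ i : Fin j, M (fiber Finset.univ φ i)
      = ∑ φ : ({a // a ∈ (Finset.univ : Finset ι)} → Fin j),
          (∏ i : Fin j, M (fiber S (restrict₁ S φ) i))
            * ∏ i : Fin j, M (fiber Sᶜ (restrict₂ S φ) i) :=
        Finset.sum_congr rfl (fun φ _ => step1 φ)
    _ = ∑ gh : ({a // a ∈ S} → Fin j) × ({a // a ∈ Sᶜ} → Fin j),
          (∏ i : Fin j, M (fiber S gh.1 i)) * ∏ i : Fin j, M (fiber Sᶜ gh.2 i) :=
        Fintype.sum_equiv (splitEquiv S j) _ _ (fun φ => rfl)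
    _ = (∑ ψ : ({a // a ∈ S} → Fin j), ∏ i : Fin j, M (fiber S ψ i))
        * (∑ χ : ({a // a ∈ Sᶜ} → Fin j), ∏ i : Fin j, M (fiber Sᶜ χ i)) := by
        rw [Fintype.sum_prod_type]
        simp_rw [← Finset.mul_sum]
        rw [← Finset.sum_mul]

/-- The main abstract lemma: the "cumulant" of a multiplicative set function vanishes. -/
lemma cum_eq_zero (M : Finset ι → ℝ) (hM0 : M ∅ = 1) (S : Finset ι) (hS : S.Nonempty)
    (hSc : Sᶜ.Nonempty) (hmult : ∀ B : Finset ι, M B = M (B ∩ S) * M (B \ S)) :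
    ∑ P ∈ partsOf (Finset.univ : Finset ι),
      (-1:ℝ)^(P.card - 1) * (((P.card - 1).factorial : ℕ) : ℝ) * ∏ B ∈ P, M B = 0 := by
  have huniv : (Finset.univ : Finset ι).Nonempty :=
    ⟨hS.choose, Finset.mem_univ _⟩
  have hfac : gPoly M (Finset.univ : Finset ι) = gPoly M S * gPoly M Sᶜ := by
    apply Polynomial.eq_of_infinite_eval_eq
    apply Set.Infinite.mono (s := Set.range ((↑) : ℕ → ℝ))
    · rintro x ⟨j, rfl⟩
      simp only [Set.mem_setOf_eq, Polynomial.eval_mul]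
      rw [gPoly_eval M hM0, gPoly_eval M hM0, gPoly_eval M hM0]
      exact colorings_factor M S hmult j
    · exact Set.infinite_range_of_injective Nat.cast_injective
  have h1 : (gPoly M (Finset.univ : Finset ι)).coeff 1 = 0 := by
    rw [hfac, Polynomial.coeff_mul]
    rw [show Finset.HasAntidiagonal.antidiagonal 1 = {(0,1),(1,0)} from rfl]
    rw [Finset.sum_insert (by simp), Finset.sum_singleton]
    rw [gPoly_coeff_zero M hS, gPoly_coeff_zero M hSc]
    ring
  rw [← gPoly_coeff_one M huniv]
  exact h1



lemma jointCum_eq_zero {Ω : Type*} [MeasurableSpace Ω] (μ : Measure Ω) [IsProbabilityMeasure μ]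
    {s : ℕ} (f : Fin s → Ω → ℝ) (S : Finset (Fin s)) (hS : S.Nonempty) (hSc : Sᶜ.Nonempty)
    (hindep : ∀ B : Finset (Fin s),
      (∫ ω, ∏ i ∈ B, f i ω ∂μ) = (∫ ω, ∏ i ∈ B ∩ S, f i ω ∂μ) * (∫ ω, ∏ i ∈ B \ S, f i ω ∂μ)) :
    jointCum μ f = 0 := by
  classical
  have h0 : (fun B : Finset (Fin s) => ∫ ω, ∏ i ∈ B, f i ω ∂μ) ∅ = 1 := by
    simp
  have key := cum_eq_zero (fun B : Finset (Fin s) => ∫ ω, ∏ i ∈ B, f i ω ∂μ) h0 S hS hSc hindep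
  rw [jointCum]
  rw [← key, partsOf]



lemma jointCum_vanish {Ω : Type*} [MeasurableSpace Ω] {μ : Measure Ω} [IsProbabilityMeasure μ]
    {p α : ℕ} {X : Fin p → Ω → ℝ} (hdep : AlphaDep μ X α)
    {s : ℕ} (x : Fin s → Fin p)
    (hint : ∀ B : Finset (Fin s),
      Integrable (fun ω => ∏ u ∈ B, (X (x u) ω - ∫ ω', X (x u) ω' ∂μ)) μ)
    (c : ℕ) (hsplit : ∀ u, (x u : ℕ) ≤ c ∨ c + (α+1) ≤ (x u : ℕ))
    (h1 : ∃ u, (x u : ℕ) ≤ c) (h2 : ∃ u, c + (α+1) ≤ (x u : ℕ)) :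
    jointCum μ (fun u ω => X (x u) ω - ∫ ω', X (x u) ω' ∂μ) = 0 := by
  classical
  set m : Fin s → ℝ := fun u => ∫ ω', X (x u) ω' ∂μ with hm
  set S : Finset (Fin s) := Finset.univ.filter (fun u => (x u : ℕ) ≤ c) with hSdef
  have huS : ∀ u, u ∈ S ↔ (x u : ℕ) ≤ c := fun u => by simp [hSdef]
  have hS : S.Nonempty := ⟨h1.choose, (huS _).2 h1.choose_spec⟩
  have hSc : Sᶜ.Nonempty := by
    obtain ⟨u, hu⟩ := h2
    refine ⟨u, Finset.mem_compl.2 (fun h => ?_)⟩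
    have := (huS u).1 h
    omega
  apply jointCum_eq_zero μ _ S hS hSc
  intro B
  have hd := hdep c (α+1) (Nat.lt_succ_self α)
  set Φ₁ : ({i : Fin p // (i:ℕ) ≤ c} → ℝ) → ℝ :=
    fun v => ∏ u ∈ B ∩ S, ((if h : (x u : ℕ) ≤ c then v ⟨x u, h⟩ else 0) - m u) with hΦ₁
  set Φ₂ : ({i : Fin p // c + (α+1) ≤ (i:ℕ)} → ℝ) → ℝ :=
    fun v => ∏ u ∈ B \ S, ((if h : c + (α+1) ≤ (x u : ℕ) then v ⟨x u, h⟩ else 0) - m u)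
    with hΦ₂
  have hmΦ₁ : Measurable Φ₁ := by
    apply Finset.measurable_prod
    intro u _
    by_cases h : (x u : ℕ) ≤ c
    · simp only [dif_pos h]
      exact (measurable_pi_apply _).sub measurable_const
    · simp only [dif_neg h]
      exact measurable_const
  have hmΦ₂ : Measurable Φ₂ := by
    apply Finset.measurable_prod
    intro u _
    by_cases h : c + (α+1) ≤ (x u : ℕ)
    · simp only [dif_pos h]
      exact (measurable_pi_apply _).sub measurable_const
    · simp only [dif_neg h]
      exact measurable_const
  have hcomp := hd.comp hmΦ₁ hmΦ₂
  have e₁ : (Φ₁ ∘ (fun ω => fun i : {i : Fin p // (i:ℕ) ≤ c} => X i ω))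
      = fun ω => ∏ u ∈ B ∩ S, (X (x u) ω - m u) := by
    funext ω
    apply Finset.prod_congr rfl
    intro u hu
    have hc : (x u : ℕ) ≤ c := (huS u).1 (Finset.mem_inter.1 hu).2
    simp only [Function.comp_apply, dif_pos hc]
  have e₂ : (Φ₂ ∘ (fun ω => fun i : {i : Fin p // c + (α+1) ≤ (i:ℕ)} => X i ω))
      = fun ω => ∏ u ∈ B \ S, (X (x u) ω - m u) := by
    funext ω
    apply Finset.prod_congr rfl
    intro u hu
    have hnS : u ∉ S := (Finset.mem_sdiff.1 hu).2
    have hc : c + (α+1) ≤ (x u : ℕ) := by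
      rcases hsplit u with h | h
      · exact absurd ((huS u).2 h) hnS
      · exact h
    simp only [Function.comp_apply, dif_pos hc]
  rw [e₁, e₂] at hcomp
  have hprod : (fun ω => ∏ u ∈ B, (X (x u) ω - m u))
      = fun ω => (∏ u ∈ B ∩ S, (X (x u) ω - m u)) * ∏ u ∈ B \ S, (X (x u) ω - m u) := by
    funext ω
    rw [← Finset.prod_filter_mul_prod_filter_not B (· ∈ S), Finset.filter_mem_eq_inter]
    congr 1
    apply Finset.prod_congr _ (fun _ _ => rfl)
    rw [Finset.sdiff_eq_filter]
  show (∫ ω, ∏ u ∈ B, (X (x u) ω - m u) ∂μ)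
      = (∫ ω, ∏ u ∈ B ∩ S, (X (x u) ω - m u) ∂μ) * ∫ ω, ∏ u ∈ B \ S, (X (x u) ω - m u) ∂μ
  rw [show (fun ω => ∏ u ∈ B, (X (x u) ω - m u)) = _ from hprod]
  exact ProbabilityTheory.IndepFun.integral_fun_mul_eq_mul_integral hcomp (hint (B ∩ S)).1 (hint (B \ S)).1


def vSum (s : ℕ) (m : ℕ) (d : Fin (s-1) → ℕ) (k : ℕ) : ℕ :=
  m + ∑ t ∈ Finset.range k, (if h : t < s - 1 then d ⟨t, h⟩ else 0)

def Psi {s p α : ℕ} (hp : 0 < p)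
    (z : Equiv.Perm (Fin s) × Fin p × (Fin (s-1) → Fin (α+1))) : Fin s → Fin p :=
  fun u => if h : vSum s (z.2.1 : ℕ) (fun t => (z.2.2 t : ℕ)) ((z.1.symm u : ℕ)) < p
    then ⟨_, h⟩ else ⟨0, hp⟩

lemma mem_range_Psi {s p α : ℕ} (hs : 0 < s) (hp : 0 < p) (x : Fin s → Fin p)
    (hgap : ∀ (k : ℕ) (h : k + 1 < s),
      ((x (Tuple.sort x ⟨k+1, h⟩) : ℕ)) ≤ (x (Tuple.sort x ⟨k, by omega⟩) : ℕ) + α) :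
    x ∈ Set.range (Psi (s := s) (α := α) hp) := by
  classical
  set σ := Tuple.sort x with hσ
  set y : Fin s → ℕ := fun k => (x (σ k) : ℕ) with hy
  have hmono : Monotone y := by
    intro a b hab
    exact (Tuple.monotone_sort x hab : x (σ a) ≤ x (σ b))
  have hd : ∀ t : Fin (s-1), (y ⟨(t:ℕ)+1, by omega⟩ : ℕ) - y ⟨(t:ℕ), by omega⟩ < α + 1 := by
    intro t
    have := hgap t (by omega)
    simp only [hy]
    omega
  set d : Fin (s-1) → Fin (α+1) := fun t => ⟨y ⟨(t:ℕ)+1, by omega⟩ - y ⟨(t:ℕ), by omega⟩, hd t⟩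
    with hdd
  set m : Fin p := x (σ ⟨0, hs⟩) with hm
  have hv : ∀ (k : ℕ) (hk : k < s),
      vSum s (m : ℕ) (fun t => (d t : ℕ)) k = y ⟨k, hk⟩ := by
    intro k
    induction k with
    | zero => intro hk; simp [vSum, hm, hy]
    | succ n ih =>
      intro hk
      have hn : n < s := by omega
      have hns : n < s - 1 := by omega
      rw [vSum, Finset.sum_range_succ, dif_pos hns, ← Nat.add_assoc]
      have hihv := ih hn
      rw [vSum] at hihv
      rw [hihv]
      have hle : y ⟨n, hn⟩ ≤ y ⟨n+1, hk⟩ := hmono (by simp [Fin.mk_le_mk])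
      show y ⟨n, hn⟩ + ((d ⟨n, hns⟩ : ℕ)) = y ⟨n+1, hk⟩
      rw [hdd]
      simp only []
      omega
  refine ⟨(σ, m, d), ?_⟩
  funext u
  have hlt : ((σ.symm u : ℕ)) < s := (σ.symm u).2
  have hvv : vSum s (m : ℕ) (fun t => (d t : ℕ)) ((σ.symm u : ℕ)) = (x u : ℕ) := by
    rw [hv _ hlt]
    rw [hy]
    simp only [Fin.eta]
    rw [Equiv.apply_symm_apply]
  rw [Psi]
  simp only [hvv]
  rw [dif_pos (x u).2]


end Stmt15

/-- For a random vector with `α`-dependent coordinates, the number of `s`-tuples of indices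
with nonvanishing joint cumulant of the centered coordinates is at most
`2^{s−1}·s!·α^{s−1}·p`. -/
theorem stmt_15 {Ω : Type*} [MeasurableSpace Ω] (μ : Measure Ω) [IsProbabilityMeasure μ]
    {p : ℕ} (α : ℕ) (hα : 1 ≤ α) (X : Fin p → Ω → ℝ) (hmeas : ∀ i, Measurable (X i))
    (hdep : AlphaDep μ X α) (s : ℕ) (hs : 2 ≤ s)
    (hint : ∀ (g : Fin s → Fin p) (B : Finset (Fin s)),
      Integrable (fun ω => ∏ u ∈ B, (X (g u) ω - ∫ ω', X (g u) ω' ∂μ)) μ) :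
    Set.ncard {j : Fin s → Fin p |
        jointCum μ (fun u ω => X (j u) ω - ∫ ω', X (j u) ω' ∂μ) ≠ 0}
      ≤ 2 ^ (s - 1) * Nat.factorial s * α ^ (s - 1) * p := by
  classical
  rcases Nat.eq_zero_or_pos p with rfl | hp
  · have hempty : IsEmpty (Fin s → Fin 0) := ⟨fun f => (f ⟨0, by omega⟩).elim0⟩
    have h0 : {j : Fin s → Fin 0 |
        jointCum μ (fun u ω => X (j u) ω - ∫ ω', X (j u) ω' ∂μ) ≠ 0} = ∅ :=
      Set.eq_empty_of_isEmpty _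
    rw [h0, Set.ncard_empty]
    exact Nat.zero_le _
  have hsub : {j : Fin s → Fin p |
        jointCum μ (fun u ω => X (j u) ω - ∫ ω', X (j u) ω' ∂μ) ≠ 0}
      ⊆ Set.range (Stmt15.Psi (s := s) (α := α) hp) := by
    intro x hx
    apply Stmt15.mem_range_Psi (by omega) hp x
    intro k hk
    by_contra hgt
    push_neg at hgt
    refine absurd ?_ hx
    set σ := Tuple.sort x with hσ
    set c := (x (σ ⟨k, by omega⟩) : ℕ) with hc
    apply Stmt15.jointCum_vanish hdep x (fun B => hint x B) c
    · intro u
      rcases le_or_gt ((σ.symm u : ℕ)) k with h | h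
      · left
        have hmono : x (σ (σ.symm u)) ≤ x (σ ⟨k, by omega⟩) :=
          Tuple.monotone_sort x (show σ.symm u ≤ (⟨k, by omega⟩ : Fin s) from h)
        rw [Equiv.apply_symm_apply] at hmono
        exact hmono
      · right
        have hmono : x (σ ⟨k+1, hk⟩) ≤ x (σ (σ.symm u)) :=
          Tuple.monotone_sort x (show (⟨k+1, hk⟩ : Fin s) ≤ σ.symm u from h)
        rw [Equiv.apply_symm_apply] at hmono
        have hmono' : (x (σ ⟨k+1, hk⟩) : ℕ) ≤ (x u : ℕ) := hmono
        omega
    · exact ⟨σ ⟨k, by omega⟩, le_refl c⟩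
    · exact ⟨σ ⟨k+1, hk⟩, by omega⟩
  have h1 : {j : Fin s → Fin p |
        jointCum μ (fun u ω => X (j u) ω - ∫ ω', X (j u) ω' ∂μ) ≠ 0}.ncard
      ≤ (Set.range (Stmt15.Psi (s := s) (α := α) hp)).ncard :=
    Set.ncard_le_ncard hsub (Set.toFinite _)
  have h2 : (Set.range (Stmt15.Psi (s := s) (α := α) hp)).ncard
      ≤ Fintype.card (Equiv.Perm (Fin s) × Fin p × (Fin (s-1) → Fin (α+1))) := by
    rw [← Set.image_univ]
    refine le_trans (Set.ncard_image_le (Set.toFinite _)) ?_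
    rw [Set.ncard_univ, Nat.card_eq_fintype_card]
  have h3 : Fintype.card (Equiv.Perm (Fin s) × Fin p × (Fin (s-1) → Fin (α+1)))
      = s.factorial * (p * (α+1)^(s-1)) := by
    simp [Fintype.card_perm]
  have h4 : (α+1)^(s-1) ≤ 2^(s-1) * α^(s-1) := by
    rw [← mul_pow]
    exact Nat.pow_le_pow_left (le_trans (Nat.add_le_add_left hα α) (le_of_eq (two_mul α).symm)) (s-1)
  refine le_trans h1 (le_trans h2 ?_)
  rw [h3]
  calc s.factorial * (p * (α+1)^(s-1))
      ≤ s.factorial * (p * (2^(s-1) * α^(s-1))) :=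
        Nat.mul_le_mul_left _ (Nat.mul_le_mul_left _ h4)
    _ = 2^(s-1) * s.factorial * α^(s-1) * p := by ring
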